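/- Let ω be a primitive cube root of unity in ℂ. Then G(ω) is isomorphic to the direct product SL(2, 𝔽₃) × C₃, where C₃ denotes the cyclic group of order 3; in particular G(ω) has order 72. -/

import Mathlib

noncomputable def Rmat (ζ : ℂ) : Matrix (Fin 2) (Fin 2) ℂ := !![ζ, 1; 0, 1]

noncomputable def Smat (ζ : ℂ) : Matrix (Fin 2) (Fin 2) ℂ := !![0, -ζ⁻¹; 1, 0]

noncomputable def G (ζ : ℂ) : Subgroup (Matrix.GeneralLinearGroup (Fin 2) ℂ) :=
  Subgroup.closure {A : Matrix.GeneralLinearGroup (Fin 2) ℂ |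
    (A : Matrix (Fin 2) (Fin 2) ℂ) = Rmat ζ ∨ (A : Matrix (Fin 2) (Fin 2) ℂ) = Smat ζ}

/-- The subgroup of `GL(2, ℂ)` consisting of matrices of determinant `1`. -/
noncomputable def detOne : Subgroup (Matrix.GeneralLinearGroup (Fin 2) ℂ) where
  carrier := {M | (M : Matrix (Fin 2) (Fin 2) ℂ).det = 1}
  one_mem' := by simp
  mul_mem' := by
    intro a b ha hb
    simp only [Set.mem_setOf_eq, Units.val_mul, Matrix.det_mul] at *
    rw [ha, hb, one_mul]
  inv_mem' := by
    intro a ha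
    simp only [Set.mem_setOf_eq] at *
    have h : ((a⁻¹ : (Matrix (Fin 2) (Fin 2) ℂ)ˣ) : Matrix (Fin 2) (Fin 2) ℂ).det *
        ((a : Matrix (Fin 2) (Fin 2) ℂ)).det = 1 := by
      rw [← Matrix.det_mul, ← Units.val_mul, inv_mul_cancel, Units.val_one, Matrix.det_one]
    rw [ha, mul_one] at h
    exact h

/-! ### The ring of Eisenstein integers, implemented as pairs `a + b ω` -/

structure Eis where
  a : ℤ
  b : ℤ
deriving DecidableEq

namespace Eis

instance : Zero Eis := ⟨⟨0,0⟩⟩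
instance : One Eis := ⟨⟨1,0⟩⟩
instance : Add Eis := ⟨fun x y => ⟨x.a + y.a, x.b + y.b⟩⟩
instance : Neg Eis := ⟨fun x => ⟨-x.a, -x.b⟩⟩
instance : Mul Eis := ⟨fun x y => ⟨x.a*y.a - x.b*y.b, x.a*y.b + x.b*y.a - x.b*y.b⟩⟩

theorem ext2 {x y : Eis} (h1 : x.a = y.a) (h2 : x.b = y.b) : x = y := by
  cases x; cases y; simp_all

@[simp] theorem add_a (x y : Eis) : (x+y).a = x.a + y.a := rfl
@[simp] theorem add_b (x y : Eis) : (x+y).b = x.b + y.b := rfl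
@[simp] theorem mul_a (x y : Eis) : (x*y).a = x.a*y.a - x.b*y.b := rfl
@[simp] theorem mul_b (x y : Eis) : (x*y).b = x.a*y.b + x.b*y.a - x.b*y.b := rfl
@[simp] theorem neg_a (x : Eis) : (-x).a = -x.a := rfl
@[simp] theorem neg_b (x : Eis) : (-x).b = -x.b := rfl
@[simp] theorem zero_a : (0 : Eis).a = 0 := rfl
@[simp] theorem zero_b : (0 : Eis).b = 0 := rfl
@[simp] theorem one_a : (1 : Eis).a = 1 := rfl
@[simp] theorem one_b : (1 : Eis).b = 0 := rfl

instance commRing : CommRing Eis where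
  add := (· + ·)
  zero := 0
  neg := Neg.neg
  mul := (· * ·)
  one := 1
  nsmul := nsmulRec
  zsmul := zsmulRec
  add_assoc := by intros; apply ext2 <;> simp <;> ring
  zero_add := by intros; apply ext2 <;> simp
  add_zero := by intros; apply ext2 <;> simp
  add_comm := by intros; apply ext2 <;> simp <;> ring
  neg_add_cancel := by intros; apply ext2 <;> simp
  left_distrib := by intros; apply ext2 <;> simp <;> ring
  right_distrib := by intros; apply ext2 <;> simp <;> ring
  zero_mul := by intros; apply ext2 <;> simp
  mul_zero := by intros; apply ext2 <;> simp
  mul_assoc := by intros; apply ext2 <;> simp <;> ring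
  one_mul := by intros; apply ext2 <;> simp
  mul_one := by intros; apply ext2 <;> simp
  mul_comm := by intros; apply ext2 <;> simp <;> ring

end Eis

/-! ### The 72 matrices of the group, over the Eisenstein integers -/

def q (a0 b0 a1 b1 a2 b2 a3 b3 : ℤ) : Matrix (Fin 2) (Fin 2) Eis :=
  !![⟨a0,b0⟩, ⟨a1,b1⟩; ⟨a2,b2⟩, ⟨a3,b3⟩]

def Rm : Matrix (Fin 2) (Fin 2) Eis := q 0 1 1 0 0 0 1 0
def Rm' : Matrix (Fin 2) (Fin 2) Eis := q (-1) (-1) 1 1 0 0 1 0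
def Sm : Matrix (Fin 2) (Fin 2) Eis := q 0 0 1 1 1 0 0 0
def Sm' : Matrix (Fin 2) (Fin 2) Eis := q 0 0 1 0 0 (-1) 0 0

set_option maxHeartbeats 1000000 in
def V : List (Matrix (Fin 2) (Fin 2) Eis) := [
  q (-1) (-1) 0 0 (-1) (-1) 0 1,
  q (-1) (-1) 0 0 (-1) 0 1 0,
  q (-1) (-1) 0 0 0 0 (-1) (-1),
  q (-1) (-1) 0 1 (-1) (-1) 1 1,
  q (-1) (-1) 0 1 (-1) 0 0 0,
  q (-1) (-1) 0 1 0 0 0 1,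
  q (-1) (-1) 1 1 (-1) (-1) 0 0,
  q (-1) (-1) 1 1 (-1) 0 1 1,
  q (-1) (-1) 1 1 0 0 1 0,
  q (-1) 0 0 0 (-1) 0 1 1,
  q (-1) 0 0 0 0 0 (-1) 0,
  q (-1) 0 0 0 0 1 0 (-1),
  q (-1) 0 1 0 (-1) 0 0 0,
  q (-1) 0 1 0 0 0 0 (-1),
  q (-1) 0 1 0 0 1 1 0,
  q (-1) 0 1 1 (-1) 0 1 0,
  q (-1) 0 1 1 0 0 1 1,
  q (-1) 0 1 1 0 1 0 0,
  q 0 (-1) (-1) 0 (-1) (-1) 0 0,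
  q 0 (-1) (-1) 0 0 (-1) 0 1,
  q 0 (-1) (-1) 0 0 0 (-1) 0,
  q 0 (-1) 0 0 (-1) (-1) 1 1,
  q 0 (-1) 0 0 0 (-1) (-1) 0,
  q 0 (-1) 0 0 0 0 0 (-1),
  q 0 (-1) 0 1 (-1) (-1) 0 1,
  q 0 (-1) 0 1 0 (-1) 0 0,
  q 0 (-1) 0 1 0 0 1 1,
  q 0 0 (-1) (-1) (-1) 0 0 0,
  q 0 0 (-1) (-1) 0 (-1) (-1) 0,
  q 0 0 (-1) (-1) 1 1 (-1) (-1),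
  q 0 0 (-1) 0 (-1) (-1) 0 1,
  q 0 0 (-1) 0 0 1 0 0,
  q 0 0 (-1) 0 1 0 (-1) 0,
  q 0 0 0 (-1) (-1) (-1) 0 0,
  q 0 0 0 (-1) 0 1 0 (-1),
  q 0 0 0 (-1) 1 0 (-1) (-1),
  q 0 0 0 1 (-1) 0 1 1,
  q 0 0 0 1 0 (-1) 0 1,
  q 0 0 0 1 1 1 0 0,
  q 0 0 1 0 (-1) 0 1 0,
  q 0 0 1 0 0 (-1) 0 0,
  q 0 0 1 0 1 1 0 (-1),
  q 0 0 1 1 (-1) (-1) 1 1,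
  q 0 0 1 1 0 1 1 0,
  q 0 0 1 1 1 0 0 0,
  q 0 1 0 (-1) 0 0 (-1) (-1),
  q 0 1 0 (-1) 0 1 0 0,
  q 0 1 0 (-1) 1 1 0 (-1),
  q 0 1 0 0 0 0 0 1,
  q 0 1 0 0 0 1 1 0,
  q 0 1 0 0 1 1 (-1) (-1),
  q 0 1 1 0 0 0 1 0,
  q 0 1 1 0 0 1 0 (-1),
  q 0 1 1 0 1 1 0 0,
  q 1 0 (-1) (-1) 0 (-1) 0 0,
  q 1 0 (-1) (-1) 0 0 (-1) (-1),
  q 1 0 (-1) (-1) 1 0 (-1) 0,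
  q 1 0 (-1) 0 0 (-1) (-1) 0,
  q 1 0 (-1) 0 0 0 0 1,
  q 1 0 (-1) 0 1 0 0 0,
  q 1 0 0 0 0 (-1) 0 1,
  q 1 0 0 0 0 0 1 0,
  q 1 0 0 0 1 0 (-1) (-1),
  q 1 1 (-1) (-1) 0 0 (-1) 0,
  q 1 1 (-1) (-1) 1 0 (-1) (-1),
  q 1 1 (-1) (-1) 1 1 0 0,
  q 1 1 0 (-1) 0 0 0 (-1),
  q 1 1 0 (-1) 1 0 0 0,
  q 1 1 0 (-1) 1 1 (-1) (-1),
  q 1 1 0 0 0 0 1 1,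
  q 1 1 0 0 1 0 (-1) 0,
  q 1 1 0 0 1 1 0 (-1)]

set_option maxRecDepth 1000000 in
set_option maxHeartbeats 1000000 in
theorem hone : (1 : Matrix (Fin 2) (Fin 2) Eis) ∈ V := by decide

set_option maxRecDepth 1000000 in
set_option maxHeartbeats 4000000 in
theorem hstep : ∀ v ∈ V, Rm * v ∈ V ∧ Rm' * v ∈ V ∧ Sm * v ∈ V ∧ Sm' * v ∈ V := by decide

/-! ### Reduction homomorphisms -/

def pi3 : Eis →+* ZMod 3 where
  toFun x := (x.a : ZMod 3) + x.b
  map_one' := by simp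
  map_zero' := by simp
  map_add' x y := by push_cast [Eis.add_a, Eis.add_b]; ring
  map_mul' x y := by
    have h3 : (3 : ZMod 3) = 0 := by decide
    push_cast [Eis.mul_a, Eis.mul_b]
    linear_combination (-(x.b : ZMod 3)) * y.b * h3

def pi7 : Eis →+* ZMod 7 where
  toFun x := (x.a : ZMod 7) + 2 * x.b
  map_one' := by simp
  map_zero' := by simp
  map_add' x y := by push_cast [Eis.add_a, Eis.add_b]; ring
  map_mul' x y := by
    have h7 : (7 : ZMod 7) = 0 := by decide
    push_cast [Eis.mul_a, Eis.mul_b]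
    linear_combination (-(x.b : ZMod 7)) * y.b * h7

set_option maxRecDepth 1000000 in
set_option maxHeartbeats 4000000 in
theorem hdet : ∀ v ∈ V, (v.map pi3).det = 1 := by decide

set_option maxRecDepth 1000000 in
set_option maxHeartbeats 4000000 in
theorem hcardV : V.toFinset.card = 72 := by decide

/-! ### The target group -/

abbrev T := Matrix.SpecialLinearGroup (Fin 2) (ZMod 3) × Multiplicative (ZMod 3)

instance : DecidableEq (Matrix.SpecialLinearGroup (Fin 2) (ZMod 3)) :=
  inferInstanceAs (DecidableEq {A : Matrix (Fin 2) (Fin 2) (ZMod 3) // A.det = 1})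

instance : Fintype (Matrix.SpecialLinearGroup (Fin 2) (ZMod 3)) :=
  inferInstanceAs (Fintype {A : Matrix (Fin 2) (Fin 2) (ZMod 3) // A.det = 1})

def aT : T := (⟨!![1,1;0,1], by decide⟩, Multiplicative.ofAdd 1)
def bT : T := (⟨!![0,-1;1,0], by decide⟩, Multiplicative.ofAdd 2)

def step (s c : Finset T) : Finset T := c.biUnion (fun x => insert x (s.image (x * ·)))

def reach (s : Finset T) : ℕ → Finset T
  | 0 => {1}
  | n+1 => step s (reach s n)

set_option maxRecDepth 1000000 in
set_option maxHeartbeats 4000000 in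
theorem reach_card : (reach {aT, bT} 11).card = 72 := by decide

theorem cardT_fintype : Fintype.card T = 72 := by decide

theorem cardT : Nat.card T = 72 := by
  rw [Nat.card_eq_fintype_card]; exact cardT_fintype

theorem reach_subset_closure (s : Finset T) :
    ∀ n, ∀ x ∈ reach s n, x ∈ Subgroup.closure (s : Set T) := by
  intro n
  induction n with
  | zero =>
    intro x hx
    simp only [reach, Finset.mem_singleton] at hx
    rw [hx]
    exact one_mem _
  | succ n ih =>
    intro x hx
    simp only [reach, step, Finset.mem_biUnion] at hx
    obtain ⟨y, hy, hmem⟩ := hx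
    rcases Finset.mem_insert.mp hmem with h | hmem
    · exact h ▸ ih y hy
    · obtain ⟨g, hg, rfl⟩ := Finset.mem_image.mp hmem
      exact mul_mem (ih y hy) (Subgroup.subset_closure (by exact_mod_cast hg))

set_option linter.constructorNameAsVariable false in
set_option maxRecDepth 1000000 in
set_option maxHeartbeats 4000000 in
theorem closure_ab_top : Subgroup.closure ({aT, bT} : Set T) = ⊤ := by
  rw [eq_top_iff]
  intro t _
  have h : reach {aT, bT} 11 = Finset.univ :=
    Finset.eq_univ_of_card _ (reach_card.trans cardT_fintype.symm)
  have ht : t ∈ reach {aT, bT} 11 := h ▸ Finset.mem_univ t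
  have := reach_subset_closure {aT, bT} 11 t ht
  simpa using this

/-! ### The discrete-log homomorphism on `(ZMod 7)ˣ` -/

def gfun : ℕ → ZMod 3
  | 1 => 0 | 2 => 1 | 3 => 2 | 4 => 2 | 5 => 1 | _ => 0

instance : Fact (Nat.Prime 7) := ⟨by norm_num⟩

theorem gmul : ∀ x y : ZMod 7, x ≠ 0 → y ≠ 0 →
    gfun (x*y).val = gfun x.val + gfun y.val := by decide

def f7 : (ZMod 7)ˣ →* Multiplicative (ZMod 3) where
  toFun u := Multiplicative.ofAdd (gfun (u : ZMod 7).val)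
  map_one' := by decide
  map_mul' u v := by
    have := gmul u v u.ne_zero v.ne_zero
    simp only [Units.val_mul] at *
    rw [this]
    rfl

/-! ### The group `G₀` over the Eisenstein integers -/

def R0u : Matrix.GeneralLinearGroup (Fin 2) Eis :=
  ⟨Rm, Rm', by decide, by decide⟩

def S0u : Matrix.GeneralLinearGroup (Fin 2) Eis :=
  ⟨Sm, Sm', by decide, by decide⟩

def G0 : Subgroup (Matrix.GeneralLinearGroup (Fin 2) Eis) :=
  Subgroup.closure {R0u, S0u}

theorem prod_mem_V (l : List (Matrix.GeneralLinearGroup (Fin 2) Eis))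
    (hl : ∀ y ∈ l, y ∈ ({R0u, S0u} : Set _) ∪ ({R0u, S0u} : Set _)⁻¹) :
    ((l.prod : Matrix.GeneralLinearGroup (Fin 2) Eis) : Matrix (Fin 2) (Fin 2) Eis) ∈ V := by
  induction l with
  | nil => simpa using hone
  | cons x xs ih =>
    have hxs := ih (fun y hy => hl y (List.mem_cons_of_mem _ hy))
    have hx := hl x List.mem_cons_self
    have hval : (x : Matrix (Fin 2) (Fin 2) Eis) = Rm ∨
        (x : Matrix (Fin 2) (Fin 2) Eis) = Rm' ∨
        (x : Matrix (Fin 2) (Fin 2) Eis) = Sm ∨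
        (x : Matrix (Fin 2) (Fin 2) Eis) = Sm' := by
      rcases hx with hx | hx
      · rcases hx with rfl | hx
        · exact Or.inl rfl
        · simp only [Set.mem_singleton_iff] at hx
          subst hx
          exact Or.inr (Or.inr (Or.inl rfl))
      · rw [Set.mem_inv] at hx
        rcases hx with hx | hx
        · have : x = R0u⁻¹ := by rw [← hx]; simp
          subst this
          exact Or.inr (Or.inl rfl)
        · simp only [Set.mem_singleton_iff] at hx
          have : x = S0u⁻¹ := by rw [← hx]; simp
          subst this
          exact Or.inr (Or.inr (Or.inr rfl))
    have hprod : ((List.prod (x :: xs) : Matrix.GeneralLinearGroup (Fin 2) Eis) :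
        Matrix (Fin 2) (Fin 2) Eis) =
        (x : Matrix (Fin 2) (Fin 2) Eis) * ((xs.prod : Matrix.GeneralLinearGroup (Fin 2) Eis) :
          Matrix (Fin 2) (Fin 2) Eis) := by
      rw [List.prod_cons]; rfl
    obtain ⟨h1, h2, h3, h4⟩ := hstep _ hxs
    rcases hval with h | h | h | h <;> rw [hprod, h]
    · exact h1
    · exact h2
    · exact h3
    · exact h4

theorem val_mem_V {g : Matrix.GeneralLinearGroup (Fin 2) Eis} (hg : g ∈ G0) :
    (g : Matrix (Fin 2) (Fin 2) Eis) ∈ V := by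
  have h1 : g ∈ Submonoid.closure (({R0u, S0u} : Set _) ∪ ({R0u, S0u} : Set _)⁻¹) := by
    rw [← Subgroup.closure_toSubmonoid]
    exact hg
  obtain ⟨l, hl, rfl⟩ := Submonoid.exists_list_of_mem_closure h1
  exact prod_mem_V l hl

def toV (g : ↥G0) : {m // m ∈ V.toFinset} :=
  ⟨((g : Matrix.GeneralLinearGroup (Fin 2) Eis) : Matrix (Fin 2) (Fin 2) Eis),
    List.mem_toFinset.mpr (val_mem_V g.2)⟩

theorem toV_inj : Function.Injective toV := by
  intro x y h
  have : ((x : Matrix.GeneralLinearGroup (Fin 2) Eis) : Matrix (Fin 2) (Fin 2) Eis) =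
      ((y : Matrix.GeneralLinearGroup (Fin 2) Eis) : Matrix (Fin 2) (Fin 2) Eis) :=
    congrArg Subtype.val h
  exact Subtype.ext (Units.ext this)

instance : Finite ↥G0 := Finite.of_injective toV toV_inj

theorem cardG0_le : Nat.card ↥G0 ≤ 72 := by
  have := Nat.card_le_card_of_injective toV toV_inj
  rwa [Nat.card_eq_fintype_card (α := {m // m ∈ V.toFinset}), Fintype.card_coe, hcardV] at this

/-! ### The homomorphism `Φ : G₀ →* T` -/

def PhiSL : ↥G0 →* Matrix.SpecialLinearGroup (Fin 2) (ZMod 3) where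
  toFun g := ⟨((g : Matrix.GeneralLinearGroup (Fin 2) Eis) :
      Matrix (Fin 2) (Fin 2) Eis).map pi3, hdet _ (val_mem_V g.2)⟩
  map_one' := Subtype.ext (by
    show ((1 : Matrix (Fin 2) (Fin 2) Eis)).map pi3 = 1
    exact Matrix.map_one pi3 (map_zero pi3) (map_one pi3))
  map_mul' g h := Subtype.ext (by
    show (((g : Matrix.GeneralLinearGroup (Fin 2) Eis) : Matrix (Fin 2) (Fin 2) Eis) *
        ((h : Matrix.GeneralLinearGroup (Fin 2) Eis) : Matrix (Fin 2) (Fin 2) Eis)).map pi3 = _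
    rw [Matrix.map_mul]
    rfl)

def PhiD : ↥G0 →* Multiplicative (ZMod 3) :=
  f7.comp ((Units.map pi7.toMonoidHom).comp
    ((Matrix.GeneralLinearGroup.det).comp G0.subtype))

def Phi : ↥G0 →* T := PhiSL.prod PhiD

theorem hR0mem : R0u ∈ G0 := Subgroup.subset_closure (by simp)
theorem hS0mem : S0u ∈ G0 := Subgroup.subset_closure (by simp)

theorem Phi_R : Phi ⟨R0u, hR0mem⟩ = aT := by decide

theorem Phi_S : Phi ⟨S0u, hS0mem⟩ = bT := by decide

theorem Phi_surj : Function.Surjective Phi := by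
  rw [← MonoidHom.range_eq_top]
  rw [eq_top_iff, ← closure_ab_top]
  rw [Subgroup.closure_le]
  rintro x (rfl | rfl)
  · exact ⟨⟨R0u, hR0mem⟩, Phi_R⟩
  · exact ⟨⟨S0u, hS0mem⟩, Phi_S⟩

theorem cardG0 : Nat.card ↥G0 = 72 :=
  le_antisymm cardG0_le (cardT ▸ Nat.card_le_card_of_surjective Phi Phi_surj)

theorem Phi_bij : Function.Bijective Phi := by
  letI : Fintype ↥G0 := Fintype.ofFinite _
  rw [Fintype.bijective_iff_surjective_and_card]
  refine ⟨Phi_surj, ?_⟩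
  rw [← Nat.card_eq_fintype_card, ← Nat.card_eq_fintype_card, cardG0, cardT]

noncomputable def e2 : ↥G0 ≃* T := MulEquiv.ofBijective Phi Phi_bij

/-! ### The embedding into `GL(2, ℂ)` -/

def epsHom (w : ℂ) (h2 : w^2 + w + 1 = 0) : Eis →+* ℂ where
  toFun x := (x.a : ℂ) + (x.b : ℂ) * w
  map_one' := by simp
  map_zero' := by simp
  map_add' x y := by push_cast [Eis.add_a, Eis.add_b]; ring
  map_mul' x y := by
    push_cast [Eis.mul_a, Eis.mul_b]
    linear_combination (-(x.b : ℂ)) * y.b * h2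

theorem G_omega_structure (ω : ℂ) (hω : IsPrimitiveRoot ω 3) :
    Nonempty (↥(G ω) ≃*
      Matrix.SpecialLinearGroup (Fin 2) (ZMod 3) × Multiplicative (ZMod 3)) ∧
    Nat.card ↥(G ω) = 72 := by
  have h3 : ω ^ 3 = 1 := hω.pow_eq_one
  have hne1 : ω ≠ 1 := hω.ne_one (by norm_num)
  have h2 : ω^2 + ω + 1 = 0 := by
    have hfac : (ω - 1) * (ω^2 + ω + 1) = 0 := by linear_combination h3
    rcases mul_eq_zero.mp hfac with h | h
    · exact absurd (by linear_combination h) hne1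
    · exact h
  have hω0 : ω ≠ 0 := by
    intro h
    rw [h] at h3
    norm_num at h3
  have hnotreal : ∀ x : ℝ, (x : ℂ) ≠ ω := by
    intro x hx
    have hx3 : (x : ℂ)^3 = 1 := by rw [hx]; exact h3
    have hx3' : x^3 = 1 := by exact_mod_cast hx3
    have hx1 : x = 1 := by nlinarith [sq_nonneg (x-1), sq_nonneg (x+1), sq_nonneg x]
    rw [hx1] at hx
    exact hne1 (by exact_mod_cast hx.symm)
  set eps := epsHom ω h2 with heps
  have hepsinj : Function.Injective eps := by
    intro x y hxy
    simp only [heps, epsHom, RingHom.coe_mk, MonoidHom.coe_mk, OneHom.coe_mk] at hxy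
    by_cases hb : x.b = y.b
    · refine Eis.ext2 ?_ hb
      have hbc : (x.b : ℂ) = (y.b : ℂ) := by exact_mod_cast hb
      have : (x.a : ℂ) = (y.a : ℂ) := by linear_combination hxy - ω * hbc
      exact_mod_cast this
    · exfalso
      have hbc : ((x.b - y.b : ℤ) : ℂ) ≠ 0 := by
        simpa using fun h => hb (by exact_mod_cast sub_eq_zero.mp (by exact_mod_cast h))
      apply hnotreal (((y.a - x.a : ℤ) : ℝ) / ((x.b - y.b : ℤ) : ℝ))
      have hbr : ((x.b - y.b : ℤ) : ℝ) ≠ 0 := by exact_mod_cast fun h => hbc (by exact_mod_cast h)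
      push_cast
      push_cast at hbc hbr
      field_simp
      linear_combination -hxy
  let epsU : Matrix.GeneralLinearGroup (Fin 2) Eis →* Matrix.GeneralLinearGroup (Fin 2) ℂ :=
    Units.map ((eps.mapMatrix : Matrix (Fin 2) (Fin 2) Eis →+* Matrix (Fin 2) (Fin 2) ℂ)).toMonoidHom
  have hmapinj : Function.Injective (eps.mapMatrix : Matrix (Fin 2) (Fin 2) Eis →+* Matrix (Fin 2) (Fin 2) ℂ) := by
    intro M N h
    ext i j
    apply hepsinj
    have := congrFun (congrFun (congrArg (fun (X : Matrix (Fin 2) (Fin 2) ℂ) => (X : Fin 2 → Fin 2 → ℂ)) h) i) j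
    simpa [RingHom.mapMatrix_apply, Matrix.map_apply] using this
  have hepsUinj : Function.Injective epsU := Units.map_injective hmapinj
  have epsval : ∀ z : Eis, eps z = (z.a : ℂ) + (z.b : ℂ) * ω := fun z => rfl
  have hvalR : ((epsU R0u : Matrix.GeneralLinearGroup (Fin 2) ℂ) :
      Matrix (Fin 2) (Fin 2) ℂ) = Rmat ω := by
    show (Rm.map eps) = Rmat ω
    ext i j
    fin_cases i <;> fin_cases j <;>
      simp [Rm, q, Rmat, Matrix.map_apply, epsval] <;> norm_num
  have hvalS : ((epsU S0u : Matrix.GeneralLinearGroup (Fin 2) ℂ) :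
      Matrix (Fin 2) (Fin 2) ℂ) = Smat ω := by
    show (Sm.map eps) = Smat ω
    have key : (1 : ℂ) + ω = -ω⁻¹ := by
      field_simp
      linear_combination h2
    ext i j
    fin_cases i <;> fin_cases j <;>
      simp [Sm, q, Smat, Matrix.map_apply, epsval] <;> norm_num
    · linear_combination key
  have hmap : Subgroup.map epsU G0 = G ω := by
    show Subgroup.map epsU (Subgroup.closure {R0u, S0u}) = G ω
    rw [MonoidHom.map_closure, G]
    congr 1
    ext A
    constructor
    · rintro ⟨x, hx, rfl⟩
      rcases hx with rfl | hx
      · exact Or.inl hvalR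
      · simp only [Set.mem_singleton_iff] at hx
        subst hx
        exact Or.inr hvalS
    · rintro (h | h)
      · exact ⟨R0u, Or.inl rfl, Units.ext (hvalR.trans h.symm)⟩
      · exact ⟨S0u, Or.inr rfl, Units.ext (hvalS.trans h.symm)⟩
  let e1 : ↥G0 ≃* ↥(Subgroup.map epsU G0) := Subgroup.equivMapOfInjective G0 epsU hepsUinj
  let e : ↥(G ω) ≃* T := ((MulEquiv.subgroupCongr hmap).symm.trans e1.symm).trans e2
  refine ⟨⟨e⟩, ?_⟩
  rw [Nat.card_congr e.toEquiv, cardT]
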